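/- The five spin-2 polarization tensors are orthonormal in the sense of the paper's normalization (PolNorm) with S! = 2: for all helicities h, h' ∈ {−2, −1, 0, 1, 2}, ∑_{i,j} e^{(h)}ᵢⱼ(k̂) · e^{(h')}ᵢⱼ(−k̂) = 2 if h = h' and 0 otherwise. -/

import Mathlib

open Complex

/-- Dot product on `ℝ³` realized as `Fin 3 → ℝ`. -/
noncomputable def dotR (u v : Fin 3 → ℝ) : ℝ := ∑ i, u i * v i

/-- The complex polarization vectors
`ê^±(k̂)ᵢ = (n̂ᵢ − (n̂·k̂)k̂ᵢ ± i(k̂×n̂)ᵢ)/√(2(1 − (n̂·k̂)²))`,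
with the sign `s = ±1` labelling the helicity. -/
noncomputable def polVec (n k : Fin 3 → ℝ) (s : ℝ) : Fin 3 → ℂ := fun i =>
  (((n i - dotR n k * k i : ℝ) : ℂ) +
      (s : ℂ) * Complex.I * (((crossProduct k n) i : ℝ) : ℂ)) /
    ((Real.sqrt (2 * (1 - (dotR n k) ^ 2)) : ℝ) : ℂ)

/-- The spin-2 polarization tensors:
`e⁽⁰⁾ᵢⱼ = √3(k̂ᵢk̂ⱼ − δᵢⱼ/3)`, `e⁽±¹⁾ᵢⱼ = i(k̂ᵢ·ê^±ⱼ + k̂ⱼ·ê^±ᵢ)`,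
`e⁽±²⁾ᵢⱼ = √2·ê^±ᵢ·ê^±ⱼ`, labelled by the helicity `h ∈ {−2,−1,0,1,2} ⊆ ℤ`. -/
noncomputable def polTen2 (n k : Fin 3 → ℝ) (h : ℤ) : Fin 3 → Fin 3 → ℂ :=
  if h = 0 then
    fun i j => ((Real.sqrt 3 : ℝ) : ℂ) *
      (((k i : ℝ) : ℂ) * ((k j : ℝ) : ℂ) - if i = j then (1 : ℂ)/3 else 0)
  else if h = 1 then
    fun i j => Complex.I *
      (((k i : ℝ) : ℂ) * polVec n k 1 j + ((k j : ℝ) : ℂ) * polVec n k 1 i)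
  else if h = -1 then
    fun i j => Complex.I *
      (((k i : ℝ) : ℂ) * polVec n k (-1) j + ((k j : ℝ) : ℂ) * polVec n k (-1) i)
  else if h = 2 then
    fun i j => ((Real.sqrt 2 : ℝ) : ℂ) * polVec n k 1 i * polVec n k 1 j
  else if h = -2 then
    fun i j => ((Real.sqrt 2 : ℝ) : ℂ) * polVec n k (-1) i * polVec n k (-1) j
  else 0


section PolAux

open Complex

private lemma pol_d2lt (n k : Fin 3 → ℝ) (hk : dotR k k = 1) (hn : dotR n n = 1)
    (hkn : (dotR n k) ^ 2 ≠ 1) : (dotR n k)^2 < 1 := by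
  have hle : (dotR n k)^2 ≤ 1 := by
    simp only [dotR, Fin.sum_univ_three] at hk hn ⊢
    nlinarith [sq_nonneg (n 0 * k 1 - n 1 * k 0), sq_nonneg (n 0 * k 2 - n 2 * k 0),
      sq_nonneg (n 1 * k 2 - n 2 * k 1)]
  exact lt_of_le_of_ne hle hkn

private lemma pol_Nne (n k : Fin 3 → ℝ) (hd : (dotR n k)^2 < 1) :
    ((Real.sqrt (2 * (1 - (dotR n k) ^ 2)) : ℝ) : ℂ) ≠ 0 := by
  simp only [ne_eq, Complex.ofReal_eq_zero]
  have : 0 < 2 * (1 - (dotR n k)^2) := by nlinarith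
  exact ne_of_gt (Real.sqrt_pos.mpr this)

private lemma pol_Nsq (n k : Fin 3 → ℝ) (hd : (dotR n k)^2 < 1) :
    ((Real.sqrt (2 * (1 - (dotR n k) ^ 2)) : ℝ) : ℂ) *
      ((Real.sqrt (2 * (1 - (dotR n k) ^ 2)) : ℝ) : ℂ)
    = 2 * (1 - ((dotR n k : ℝ) : ℂ)^2) := by
  have h1 : (0:ℝ) ≤ 2 * (1 - (dotR n k)^2) := by nlinarith
  rw [← Complex.ofReal_mul, Real.mul_self_sqrt h1]
  push_cast; ring

private lemma pol_dKK (n k : Fin 3 → ℝ) (hk : dotR k k = 1) :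
    ∑ i, ((k i : ℝ) : ℂ) * ((k i : ℝ) : ℂ) = 1 := by
  have := congrArg (fun x : ℝ => (x:ℂ)) hk
  simp only [dotR, Fin.sum_univ_three] at this
  push_cast at this
  simp only [Fin.sum_univ_three]
  exact this

private lemma pol_dKE (n k : Fin 3 → ℝ) (hk : dotR k k = 1) (hd : (dotR n k)^2 < 1) (s : ℝ) :
    ∑ i, ((k i : ℝ) : ℂ) * polVec n k s i = 0 := by
  have hN := pol_Nne n k hd
  have hk' : ((k 0:ℝ):ℂ)*(k 0) + ((k 1:ℝ):ℂ)*(k 1) + ((k 2:ℝ):ℂ)*(k 2) = 1 := by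
    have := congrArg (fun x : ℝ => (x:ℂ)) hk
    simp only [dotR, Fin.sum_univ_three] at this
    push_cast at this
    exact this
  simp only [polVec, cross_apply, Fin.sum_univ_three, Matrix.cons_val_zero,
    Matrix.cons_val_one, Matrix.head_cons, Matrix.cons_val_two, Matrix.tail_cons,
    ← mul_div_assoc, ← add_div]
  rw [div_eq_zero_iff]
  left
  simp only [dotR, Fin.sum_univ_three]
  push_cast
  linear_combination (-(((n 0:ℝ):ℂ)*(k 0) + ((n 1:ℝ):ℂ)*(k 1) + ((n 2:ℝ):ℂ)*(k 2))) * hk'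

private lemma pol_dEE (n k : Fin 3 → ℝ) (hk : dotR k k = 1) (hn : dotR n n = 1)
    (hd : (dotR n k)^2 < 1) (s t : ℝ) :
    ∑ i, polVec n k s i * polVec n k t i = (1 - (s:ℂ)*(t:ℂ))/2 := by
  have hN := pol_Nne n k hd
  have hNN := pol_Nsq n k hd
  have hk' : ((k 0:ℝ):ℂ)*(k 0) + ((k 1:ℝ):ℂ)*(k 1) + ((k 2:ℝ):ℂ)*(k 2) = 1 := by
    have := congrArg (fun x : ℝ => (x:ℂ)) hk
    simp only [dotR, Fin.sum_univ_three] at this; push_cast at this; exact this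
  have hn' : ((n 0:ℝ):ℂ)*(n 0) + ((n 1:ℝ):ℂ)*(n 1) + ((n 2:ℝ):ℂ)*(n 2) = 1 := by
    have := congrArg (fun x : ℝ => (x:ℂ)) hn
    simp only [dotR, Fin.sum_univ_three] at this; push_cast at this; exact this
  have hI : (Complex.I)^2 = -1 := Complex.I_sq
  simp only [polVec, cross_apply, Fin.sum_univ_three, Matrix.cons_val_zero,
    Matrix.cons_val_one, Matrix.head_cons, Matrix.cons_val_two, Matrix.tail_cons,
    div_mul_div_comm, ← add_div]
  rw [div_eq_iff (mul_ne_zero hN hN)]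
  simp only [dotR, Fin.sum_univ_three] at hNN ⊢
  push_cast at hNN ⊢
  set D : ℂ := (n 0:ℝ)*(k 0:ℝ) + (n 1:ℝ)*(k 1:ℝ) + (n 2:ℝ)*(k 2:ℝ) with hD
  linear_combination (-(1 - (s:ℂ)*t)/2) * hNN +
    ((s:ℂ)*t*(((k 1:ℝ)*(n 2:ℝ)-(k 2:ℝ)*(n 1:ℝ))^2 + ((k 2:ℝ)*(n 0:ℝ)-(k 0:ℝ)*(n 2:ℝ))^2 +
      ((k 0:ℝ)*(n 1:ℝ)-(k 1:ℝ)*(n 0:ℝ))^2 : ℂ)) * hI +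
    (D^2 - (s:ℂ)*t*(((n 0:ℝ):ℂ)*(n 0) + ((n 1:ℝ):ℂ)*(n 1) + ((n 2:ℝ):ℂ)*(n 2))) * hk' +
    (1 - (s:ℂ)*t) * hn'

private lemma pol_dotR_neg (n k : Fin 3 → ℝ) : dotR n (fun l => -k l) = -dotR n k := by
  simp [dotR, Fin.sum_univ_three]

private lemma polVec_neg (n k : Fin 3 → ℝ) (s : ℝ) :
    polVec n (fun l => -k l) s = polVec n k (-s) := by
  funext i
  simp only [polVec, pol_dotR_neg, cross_apply, neg_sq, neg_mul, mul_neg, neg_neg]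
  fin_cases i <;>
    · norm_num [Matrix.cons_val_zero, Matrix.cons_val_one, Matrix.head_cons]
      push_cast
      ring

private lemma ten0 (n k : Fin 3 → ℝ) :
    polTen2 n k 0 = fun i j => ((Real.sqrt 3 : ℝ) : ℂ) *
      (((k i : ℝ) : ℂ) * ((k j : ℝ) : ℂ) - if i = j then (1 : ℂ)/3 else 0) := by
  norm_num [polTen2]

private lemma ten1 (n k : Fin 3 → ℝ) :
    polTen2 n k 1 = fun i j => Complex.I *
      (((k i : ℝ) : ℂ) * polVec n k 1 j + ((k j : ℝ) : ℂ) * polVec n k 1 i) := by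
  norm_num [polTen2]

private lemma tenm1 (n k : Fin 3 → ℝ) :
    polTen2 n k (-1) = fun i j => Complex.I *
      (((k i : ℝ) : ℂ) * polVec n k (-1) j + ((k j : ℝ) : ℂ) * polVec n k (-1) i) := by
  norm_num [polTen2]

private lemma ten2 (n k : Fin 3 → ℝ) :
    polTen2 n k 2 = fun i j =>
      ((Real.sqrt 2 : ℝ) : ℂ) * polVec n k 1 i * polVec n k 1 j := by
  norm_num [polTen2]

private lemma tenm2 (n k : Fin 3 → ℝ) :
    polTen2 n k (-2) = fun i j =>
      ((Real.sqrt 2 : ℝ) : ℂ) * polVec n k (-1) i * polVec n k (-1) j := by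
  norm_num [polTen2]

private lemma ten_neg0 (n k : Fin 3 → ℝ) :
    polTen2 n (fun l => -k l) 0 = fun i j => ((Real.sqrt 3 : ℝ) : ℂ) *
      (((k i : ℝ) : ℂ) * ((k j : ℝ) : ℂ) - if i = j then (1 : ℂ)/3 else 0) := by
  funext i j
  norm_num [polTen2]

private lemma ten_neg1 (n k : Fin 3 → ℝ) :
    polTen2 n (fun l => -k l) 1 = fun i j => (-Complex.I) *
      (((k i : ℝ) : ℂ) * polVec n k (-1) j + ((k j : ℝ) : ℂ) * polVec n k (-1) i) := by
  funext i j
  norm_num [polTen2, polVec_neg]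
  ring_nf

private lemma ten_negm1 (n k : Fin 3 → ℝ) :
    polTen2 n (fun l => -k l) (-1) = fun i j => (-Complex.I) *
      (((k i : ℝ) : ℂ) * polVec n k 1 j + ((k j : ℝ) : ℂ) * polVec n k 1 i) := by
  funext i j
  norm_num [polTen2, polVec_neg]
  ring_nf

private lemma ten_neg2 (n k : Fin 3 → ℝ) :
    polTen2 n (fun l => -k l) 2 = fun i j =>
      ((Real.sqrt 2 : ℝ) : ℂ) * polVec n k (-1) i * polVec n k (-1) j := by
  funext i j
  norm_num [polTen2, polVec_neg]

private lemma ten_negm2 (n k : Fin 3 → ℝ) :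
    polTen2 n (fun l => -k l) (-2) = fun i j =>
      ((Real.sqrt 2 : ℝ) : ℂ) * polVec n k 1 i * polVec n k 1 j := by
  funext i j
  norm_num [polTen2, polVec_neg]

/- Shape lemmas: pure algebra on `Fin 3` sums. -/

private lemma G00 (a b : ℂ) (x y : Fin 3 → ℂ) :
    ∑ i, ∑ j, (a * (x i * x j - if i = j then (1:ℂ)/3 else 0)) *
      (b * (y i * y j - if i = j then (1:ℂ)/3 else 0)) =
    a * b * ((∑ i, x i * y i)^2 - (∑ i, x i * x i)/3 - (∑ i, y i * y i)/3 + 1/3) := by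
  simp [Fin.sum_univ_three]; ring

private lemma G01 (a b : ℂ) (x y e : Fin 3 → ℂ) :
    ∑ i, ∑ j, (a * (x i * x j - if i = j then (1:ℂ)/3 else 0)) *
      (b * (y i * e j + y j * e i)) =
    a * b * (2 * (∑ i, x i * y i) * (∑ i, x i * e i) - 2/3 * (∑ i, y i * e i)) := by
  simp [Fin.sum_univ_three]; ring

private lemma G10 (a b : ℂ) (x e y : Fin 3 → ℂ) :
    ∑ i, ∑ j, (a * (x i * e j + x j * e i)) *
      (b * (y i * y j - if i = j then (1:ℂ)/3 else 0)) =
    a * b * (2 * (∑ i, x i * y i) * (∑ i, y i * e i) - 2/3 * (∑ i, x i * e i)) := by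
  simp [Fin.sum_univ_three]; ring

private lemma G02 (a b : ℂ) (x f : Fin 3 → ℂ) :
    ∑ i, ∑ j, (a * (x i * x j - if i = j then (1:ℂ)/3 else 0)) * (b * f i * f j) =
    a * b * ((∑ i, x i * f i)^2 - (∑ i, f i * f i)/3) := by
  simp [Fin.sum_univ_three]; ring

private lemma G20 (a b : ℂ) (e y : Fin 3 → ℂ) :
    ∑ i, ∑ j, (a * e i * e j) * (b * (y i * y j - if i = j then (1:ℂ)/3 else 0)) =
    a * b * ((∑ i, y i * e i)^2 - (∑ i, e i * e i)/3) := by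
  simp [Fin.sum_univ_three]; ring

private lemma G11 (a b : ℂ) (x e y f : Fin 3 → ℂ) :
    ∑ i, ∑ j, (a * (x i * e j + x j * e i)) * (b * (y i * f j + y j * f i)) =
    a * b * (2 * (∑ i, x i * y i) * (∑ i, e i * f i) +
      2 * (∑ i, x i * f i) * (∑ i, y i * e i)) := by
  simp [Fin.sum_univ_three]; ring

private lemma G12 (a b : ℂ) (x e f : Fin 3 → ℂ) :
    ∑ i, ∑ j, (a * (x i * e j + x j * e i)) * (b * f i * f j) =
    a * b * (2 * (∑ i, x i * f i) * (∑ i, e i * f i)) := by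
  simp [Fin.sum_univ_three]; ring

private lemma G21 (a b : ℂ) (e y f : Fin 3 → ℂ) :
    ∑ i, ∑ j, (a * e i * e j) * (b * (y i * f j + y j * f i)) =
    a * b * (2 * (∑ i, y i * e i) * (∑ i, e i * f i)) := by
  simp [Fin.sum_univ_three]; ring

private lemma G22 (a b : ℂ) (e f : Fin 3 → ℂ) :
    ∑ i, ∑ j, (a * e i * e j) * (b * f i * f j) =
    a * b * (∑ i, e i * f i)^2 := by
  simp [Fin.sum_univ_three]; ring

end PolAux

/-- The five spin-2 polarization tensors are orthonormal in the sense of the paper'"'"'s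
normalization (PolNorm) with `S! = 2`:
`∑_{i,j} e^{(h)}ᵢⱼ(k̂)·e^{(h)}ᵢⱼ(−k̂)` equals `2` if `h = h'"'"'` and `0` otherwise. -/

theorem polTen2_orthonormal (n k : Fin 3 → ℝ)
    (hk : dotR k k = 1) (hn : dotR n n = 1) (hkn : (dotR n k) ^ 2 ≠ 1)
    (h h' : ℤ) (hh : h ∈ ({-2, -1, 0, 1, 2} : Set ℤ)) (hh' : h' ∈ ({-2, -1, 0, 1, 2} : Set ℤ)) :
    ∑ i, ∑ j, polTen2 n k h i j * polTen2 n (fun l => -k l) h' i j =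
      if h = h' then 2 else 0 := by

  have hd : (dotR n k)^2 < 1 := pol_d2lt n k hk hn hkn
  have kk : ∑ i, ((k i : ℝ) : ℂ) * ((k i : ℝ) : ℂ) = 1 := pol_dKK n k hk
  have ke1 : ∑ i, ((k i : ℝ) : ℂ) * polVec n k 1 i = 0 := pol_dKE n k hk hd 1
  have kem1 : ∑ i, ((k i : ℝ) : ℂ) * polVec n k (-1) i = 0 := pol_dKE n k hk hd (-1)
  have e11 : ∑ i, polVec n k 1 i * polVec n k 1 i = 0 := by
    have := pol_dEE n k hk hn hd 1 1; norm_num at this; exact this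
  have em1m1 : ∑ i, polVec n k (-1) i * polVec n k (-1) i = 0 := by
    have := pol_dEE n k hk hn hd (-1) (-1); norm_num at this; exact this
  have e1m1 : ∑ i, polVec n k 1 i * polVec n k (-1) i = 1 := by
    have := pol_dEE n k hk hn hd 1 (-1); norm_num at this; exact this
  have em11 : ∑ i, polVec n k (-1) i * polVec n k 1 i = 1 := by
    have := pol_dEE n k hk hn hd (-1) 1; norm_num at this; exact this
  have h3 : ((Real.sqrt 3 : ℝ) : ℂ) * ((Real.sqrt 3 : ℝ) : ℂ) = 3 := by
    rw [← Complex.ofReal_mul, Real.mul_self_sqrt (by norm_num)]; norm_num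
  have h2 : ((Real.sqrt 2 : ℝ) : ℂ) * ((Real.sqrt 2 : ℝ) : ℂ) = 2 := by
    rw [← Complex.ofReal_mul, Real.mul_self_sqrt (by norm_num)]; norm_num
  simp only [Set.mem_insert_iff, Set.mem_singleton_iff] at hh hh'
  rcases hh with rfl | rfl | rfl | rfl | rfl <;>
    rcases hh' with rfl | rfl | rfl | rfl | rfl
  · -- h = -2, h' = -2
    rw [tenm2 n k, ten_negm2 n k]
    rw [G22]
    simp only [kk, ke1, kem1, e11, em1m1, e1m1, em11]
    norm_num [h3, h2, Complex.I_mul_I]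
  · -- h = -2, h' = -1
    rw [tenm2 n k, ten_negm1 n k]
    rw [G21]
    simp only [kk, ke1, kem1, e11, em1m1, e1m1, em11]
    norm_num [h3, h2, Complex.I_mul_I]
  · -- h = -2, h' = 0
    rw [tenm2 n k, ten_neg0 n k]
    rw [G20]
    simp only [kk, ke1, kem1, e11, em1m1, e1m1, em11]
    norm_num [h3, h2, Complex.I_mul_I]
  · -- h = -2, h' = 1
    rw [tenm2 n k, ten_neg1 n k]
    rw [G21]
    simp only [kk, ke1, kem1, e11, em1m1, e1m1, em11]
    norm_num [h3, h2, Complex.I_mul_I]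
  · -- h = -2, h' = 2
    rw [tenm2 n k, ten_neg2 n k]
    rw [G22]
    simp only [kk, ke1, kem1, e11, em1m1, e1m1, em11]
    norm_num [h3, h2, Complex.I_mul_I]
  · -- h = -1, h' = -2
    rw [tenm1 n k, ten_negm2 n k]
    rw [G12]
    simp only [kk, ke1, kem1, e11, em1m1, e1m1, em11]
    norm_num [h3, h2, Complex.I_mul_I]
  · -- h = -1, h' = -1
    rw [tenm1 n k, ten_negm1 n k]
    rw [G11]
    simp only [kk, ke1, kem1, e11, em1m1, e1m1, em11]
    norm_num [h3, h2, Complex.I_mul_I]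
  · -- h = -1, h' = 0
    rw [tenm1 n k, ten_neg0 n k]
    rw [G10]
    simp only [kk, ke1, kem1, e11, em1m1, e1m1, em11]
    norm_num [h3, h2, Complex.I_mul_I]
  · -- h = -1, h' = 1
    rw [tenm1 n k, ten_neg1 n k]
    rw [G11]
    simp only [kk, ke1, kem1, e11, em1m1, e1m1, em11]
    norm_num [h3, h2, Complex.I_mul_I]
  · -- h = -1, h' = 2
    rw [tenm1 n k, ten_neg2 n k]
    rw [G12]
    simp only [kk, ke1, kem1, e11, em1m1, e1m1, em11]
    norm_num [h3, h2, Complex.I_mul_I]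
  · -- h = 0, h' = -2
    rw [ten0 n k, ten_negm2 n k]
    rw [G02]
    simp only [kk, ke1, kem1, e11, em1m1, e1m1, em11]
    norm_num [h3, h2, Complex.I_mul_I]
  · -- h = 0, h' = -1
    rw [ten0 n k, ten_negm1 n k]
    rw [G01]
    simp only [kk, ke1, kem1, e11, em1m1, e1m1, em11]
    norm_num [h3, h2, Complex.I_mul_I]
  · -- h = 0, h' = 0
    rw [ten0 n k, ten_neg0 n k]
    rw [G00]
    simp only [kk, ke1, kem1, e11, em1m1, e1m1, em11]
    norm_num [h3, h2, Complex.I_mul_I]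
  · -- h = 0, h' = 1
    rw [ten0 n k, ten_neg1 n k]
    rw [G01]
    simp only [kk, ke1, kem1, e11, em1m1, e1m1, em11]
    norm_num [h3, h2, Complex.I_mul_I]
  · -- h = 0, h' = 2
    rw [ten0 n k, ten_neg2 n k]
    rw [G02]
    simp only [kk, ke1, kem1, e11, em1m1, e1m1, em11]
    norm_num [h3, h2, Complex.I_mul_I]
  · -- h = 1, h' = -2
    rw [ten1 n k, ten_negm2 n k]
    rw [G12]
    simp only [kk, ke1, kem1, e11, em1m1, e1m1, em11]
    norm_num [h3, h2, Complex.I_mul_I]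
  · -- h = 1, h' = -1
    rw [ten1 n k, ten_negm1 n k]
    rw [G11]
    simp only [kk, ke1, kem1, e11, em1m1, e1m1, em11]
    norm_num [h3, h2, Complex.I_mul_I]
  · -- h = 1, h' = 0
    rw [ten1 n k, ten_neg0 n k]
    rw [G10]
    simp only [kk, ke1, kem1, e11, em1m1, e1m1, em11]
    norm_num [h3, h2, Complex.I_mul_I]
  · -- h = 1, h' = 1
    rw [ten1 n k, ten_neg1 n k]
    rw [G11]
    simp only [kk, ke1, kem1, e11, em1m1, e1m1, em11]
    norm_num [h3, h2, Complex.I_mul_I]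
  · -- h = 1, h' = 2
    rw [ten1 n k, ten_neg2 n k]
    rw [G12]
    simp only [kk, ke1, kem1, e11, em1m1, e1m1, em11]
    norm_num [h3, h2, Complex.I_mul_I]
  · -- h = 2, h' = -2
    rw [ten2 n k, ten_negm2 n k]
    rw [G22]
    simp only [kk, ke1, kem1, e11, em1m1, e1m1, em11]
    norm_num [h3, h2, Complex.I_mul_I]
  · -- h = 2, h' = -1
    rw [ten2 n k, ten_negm1 n k]
    rw [G21]
    simp only [kk, ke1, kem1, e11, em1m1, e1m1, em11]
    norm_num [h3, h2, Complex.I_mul_I]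
  · -- h = 2, h' = 0
    rw [ten2 n k, ten_neg0 n k]
    rw [G20]
    simp only [kk, ke1, kem1, e11, em1m1, e1m1, em11]
    norm_num [h3, h2, Complex.I_mul_I]
  · -- h = 2, h' = 1
    rw [ten2 n k, ten_neg1 n k]
    rw [G21]
    simp only [kk, ke1, kem1, e11, em1m1, e1m1, em11]
    norm_num [h3, h2, Complex.I_mul_I]
  · -- h = 2, h' = 2
    rw [ten2 n k, ten_neg2 n k]
    rw [G22]
    simp only [kk, ke1, kem1, e11, em1m1, e1m1, em11]
    norm_num [h3, h2, Complex.I_mul_I]
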